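/- Let D₁ be a p×p and D₂ a q×q real diagonal matrix with nonnegative entries, F a q×p real matrix, and P_Z the orthogonal projector onto the range of Z = [I; F]. Then ‖diag(D₁, D₂) (I − P_Z) diag(D₁, D₂)‖ ≤ ‖F D₁‖² + ‖D₂‖², where ‖·‖ is the spectral norm. -/

import Mathlib

set_option maxHeartbeats 1000000

open Matrix

/-- Spectral (operator `ℓ²→ℓ²`) norm of a real matrix. -/
noncomputable def specNorm {m n : Type*} [Fintype m] [Fintype n] [DecidableEq n]
    (A : Matrix m n ℝ) : ℝ :=
  ‖LinearMap.toContinuousLinearMap (Matrix.toEuclideanLin A)‖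

section aux
open scoped Matrix.Norms.L2Operator

lemma specNorm_eq_l2 {m n : Type*} [Fintype m] [Fintype n] [DecidableEq n]
    (A : Matrix m n ℝ) : specNorm A = ‖A‖ := rfl

theorem conjugated_complementary_projector_norm_bound {p q : ℕ}
    (d₁ : Fin p → ℝ) (d₂ : Fin q → ℝ)
    (hd₁ : ∀ i, 0 ≤ d₁ i) (hd₂ : ∀ i, 0 ≤ d₂ i)
    (F : Matrix (Fin q) (Fin p) ℝ)
    (Z : Matrix (Fin p ⊕ Fin q) (Fin p) ℝ)
    (hZ : Z = Matrix.fromRows (1 : Matrix (Fin p) (Fin p) ℝ) F)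
    (PZ : Matrix (Fin p ⊕ Fin q) (Fin p ⊕ Fin q) ℝ)
    (hPZsym : PZᵀ = PZ) (hPZidem : PZ * PZ = PZ)
    (hPZrange : LinearMap.range PZ.mulVecLin = LinearMap.range Z.mulVecLin)
    (D : Matrix (Fin p ⊕ Fin q) (Fin p ⊕ Fin q) ℝ)
    (hD : D = Matrix.fromBlocks (diagonal d₁) 0 0 (diagonal d₂)) :
    specNorm (D * (1 - PZ) * D) ≤
      specNorm (F * diagonal d₁) ^ 2 + specNorm (diagonal d₂) ^ 2 := by
  classical
  set Q : Matrix (Fin p ⊕ Fin q) (Fin p ⊕ Fin q) ℝ := 1 - PZ with hQ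
  set a : ℝ := specNorm (F * diagonal d₁) with ha
  set b : ℝ := specNorm (diagonal d₂) with hb
  have ha0 : 0 ≤ a := by rw [ha, specNorm_eq_l2]; exact norm_nonneg _
  have hb0 : 0 ≤ b := by rw [hb, specNorm_eq_l2]; exact norm_nonneg _
  set s : ℝ := Real.sqrt (a ^ 2 + b ^ 2) with hs
  have hs0 : 0 ≤ s := Real.sqrt_nonneg _
  have hs2 : s ^ 2 = a ^ 2 + b ^ 2 := Real.sq_sqrt (by positivity)
  have hDT : Dᵀ = D := by
    rw [hD]; simp [fromBlocks_transpose, diagonal_transpose]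
  have hQT : Qᵀ = Q := by
    rw [hQ]; simp [transpose_sub, transpose_one, hPZsym]
  have hQQ : Q * Q = Q := by
    simp only [hQ, Matrix.mul_sub, Matrix.sub_mul, Matrix.mul_one, Matrix.one_mul, hPZidem]
    abel
  set A : Matrix (Fin p ⊕ Fin q) (Fin p ⊕ Fin q) ℝ := Q * D with hA
  have hM : D * Q * D = Aᵀ * A := by
    rw [hA, transpose_mul, hDT, hQT, Matrix.mul_assoc D Q (Q * D),
      ← Matrix.mul_assoc Q Q D, hQQ, ← Matrix.mul_assoc]
  have hAbound : specNorm A ≤ s := by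
    rw [specNorm_eq_l2, Matrix.l2_opNorm_def]
    refine ContinuousLinearMap.opNorm_le_bound _ hs0 fun x => ?_
    have hx : ((Matrix.toEuclideanLin.trans LinearMap.toContinuousLinearMap) A) x =
        (WithLp.equiv 2 _).symm (A *ᵥ (WithLp.equiv 2 _ x)) := by
      exact Matrix.toEuclideanLin_apply A x
    rw [hx]
    set x' : (Fin p ⊕ Fin q) → ℝ := WithLp.equiv 2 _ x with hx'
    set u : EuclideanSpace ℝ (Fin p) := (WithLp.equiv 2 _).symm (fun i => x' (Sum.inl i)) with hu
    set v : EuclideanSpace ℝ (Fin q) := (WithLp.equiv 2 _).symm (fun j => x' (Sum.inr j)) with hv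
    have hxe : x' = Sum.elim (fun i => x' (Sum.inl i)) (fun j => x' (Sum.inr j)) := by
      funext i; cases i <;> rfl
    set c : Fin p → ℝ := diagonal d₁ *ᵥ (fun i => x' (Sum.inl i)) with hc
    set w : Fin q → ℝ :=
      (diagonal d₂ *ᵥ fun j => x' (Sum.inr j)) - F *ᵥ c with hw
    have hsplit : D *ᵥ x' = Z *ᵥ c + Sum.elim (0 : Fin p → ℝ) w := by
      conv_lhs => rw [hD, hxe]
      rw [fromBlocks_mulVec, hZ, fromRows_mulVec]
      funext i
      cases i with
      | inl i => simp [hc, Matrix.one_mulVec]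
      | inr j => simp [hw]
    have hQZ : Q *ᵥ (Z *ᵥ c) = 0 := by
      obtain ⟨y, hy⟩ : Z *ᵥ c ∈ LinearMap.range PZ.mulVecLin := by
        rw [hPZrange]; exact ⟨c, rfl⟩
      have hy' : PZ *ᵥ y = Z *ᵥ c := hy
      rw [hQ, Matrix.sub_mulVec, Matrix.one_mulVec, ← hy', Matrix.mulVec_mulVec, hPZidem,
        sub_self]
    have hAx : A *ᵥ x' = Q *ᵥ (Sum.elim (0 : Fin p → ℝ) w) := by
      rw [hA, ← Matrix.mulVec_mulVec, hsplit, Matrix.mulVec_add, hQZ, zero_add]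
    set r : EuclideanSpace ℝ (Fin p ⊕ Fin q) := (WithLp.equiv 2 _).symm (Sum.elim (0 : Fin p → ℝ) w) with hr
    have hQnorm : ‖Q‖ ≤ 1 := by
      have h1 : ‖Q‖ * ‖Q‖ = ‖Q‖ := by
        rw [← Matrix.l2_opNorm_conjTranspose_mul_self Q, conjTranspose_eq_transpose_of_trivial,
          hQT, hQQ]
      nlinarith [norm_nonneg Q]
    have step1 : ‖(WithLp.equiv 2 _).symm (A *ᵥ x')‖ ≤ ‖r‖ := by
      rw [hAx]
      calc ‖(WithLp.equiv 2 _).symm (Q *ᵥ (Sum.elim (0 : Fin p → ℝ) w))‖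
          ≤ ‖Q‖ * ‖r‖ := Matrix.l2_opNorm_mulVec Q r
        _ ≤ 1 * ‖r‖ := by gcongr
        _ = ‖r‖ := one_mul _
    have hrw : ‖r‖ = ‖(WithLp.equiv 2 (Fin q → ℝ)).symm w‖ := by
      rw [EuclideanSpace.norm_eq, EuclideanSpace.norm_eq]
      congr 1
      rw [Fintype.sum_sum_type]
      simp [hr]
    have hwle : ‖(WithLp.equiv 2 (Fin q → ℝ)).symm w‖ ≤ a * ‖u‖ + b * ‖v‖ := by
      have hw2 : w = (diagonal d₂ *ᵥ (WithLp.equiv 2 _ v)) -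
          ((F * diagonal d₁) *ᵥ (WithLp.equiv 2 _ u)) := by
        rw [hw, ← Matrix.mulVec_mulVec]; rfl
      rw [hw2]
      have hsub : (WithLp.equiv 2 (Fin q → ℝ)).symm
          ((diagonal d₂ *ᵥ (WithLp.equiv 2 _ v)) - ((F * diagonal d₁) *ᵥ (WithLp.equiv 2 _ u)))
          = (WithLp.equiv 2 (Fin q → ℝ)).symm (diagonal d₂ *ᵥ (WithLp.equiv 2 _ v)) -
            (WithLp.equiv 2 (Fin q → ℝ)).symm ((F * diagonal d₁) *ᵥ (WithLp.equiv 2 _ u)) := rfl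
      rw [hsub]
      refine (norm_sub_le _ _).trans ?_
      have h1 := Matrix.l2_opNorm_mulVec (diagonal d₂) v
      have h2 := Matrix.l2_opNorm_mulVec (F * diagonal d₁) u
      rw [ha, specNorm_eq_l2]; rw [hb, specNorm_eq_l2]
      calc ‖(WithLp.equiv 2 (Fin q → ℝ)).symm (diagonal d₂ *ᵥ (WithLp.equiv 2 _ v))‖ +
            ‖(WithLp.equiv 2 (Fin q → ℝ)).symm ((F * diagonal d₁) *ᵥ (WithLp.equiv 2 _ u))‖
          ≤ ‖diagonal d₂‖ * ‖v‖ + ‖F * diagonal d₁‖ * ‖u‖ := add_le_add h1 h2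
        _ = ‖F * diagonal d₁‖ * ‖u‖ + ‖diagonal d₂‖ * ‖v‖ := by ring
    have hx2 : ‖u‖ ^ 2 + ‖v‖ ^ 2 = ‖x‖ ^ 2 := by
      rw [EuclideanSpace.norm_eq, EuclideanSpace.norm_eq, EuclideanSpace.norm_eq,
        Real.sq_sqrt (by positivity), Real.sq_sqrt (by positivity),
        Real.sq_sqrt (by positivity)]
      rw [Fintype.sum_sum_type]
      rfl
    have hfinal : a * ‖u‖ + b * ‖v‖ ≤ s * ‖x‖ := by
      have hnn : 0 ≤ a * ‖u‖ + b * ‖v‖ := by positivity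
      have hsq : (a * ‖u‖ + b * ‖v‖) ^ 2 ≤ (s * ‖x‖) ^ 2 := by
        rw [mul_pow, hs2]
        nlinarith [sq_nonneg (a * ‖v‖ - b * ‖u‖), hx2]
      calc a * ‖u‖ + b * ‖v‖ = Real.sqrt ((a * ‖u‖ + b * ‖v‖) ^ 2) :=
            (Real.sqrt_sq hnn).symm
        _ ≤ Real.sqrt ((s * ‖x‖) ^ 2) := Real.sqrt_le_sqrt hsq
        _ = s * ‖x‖ := Real.sqrt_sq (by positivity)
    calc ‖(WithLp.equiv 2 _).symm (A *ᵥ x')‖ ≤ ‖r‖ := step1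
      _ = ‖(WithLp.equiv 2 (Fin q → ℝ)).symm w‖ := hrw
      _ ≤ a * ‖u‖ + b * ‖v‖ := hwle
      _ ≤ s * ‖x‖ := hfinal
  have hAnn : 0 ≤ specNorm A := by rw [specNorm_eq_l2]; exact norm_nonneg _
  calc specNorm (D * Q * D) = specNorm (Aᵀ * A) := by rw [hM]
    _ = specNorm A * specNorm A := by
        rw [specNorm_eq_l2, specNorm_eq_l2, ← conjTranspose_eq_transpose_of_trivial,
          Matrix.l2_opNorm_conjTranspose_mul_self]
    _ ≤ s * s := mul_le_mul hAbound hAbound hAnn hs0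
    _ = a ^ 2 + b ^ 2 := by rw [← sq, hs2]

end aux
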